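/- Let Φ̄(x) = P(Z > x) for Z a standard normal random variable, and let Φ̄^{-1} denote its inverse on (0,1). Then for all 0 < y < 1/2: Φ̄^{-1}(y) ≥ √( 2·log(1/y) − 2·log 2 + 2/π ) − √(2/π). -/

import Mathlib

open Real MeasureTheory Set Filter Topology

/-- The complementary cumulative distribution function of the standard normal
distribution: `Φ̄(x) = ∫_x^∞ (2π)^{-1/2} e^{-u²/2} du`. -/
noncomputable def PhiBar (x : ℝ) : ℝ :=
  ∫ u in Set.Ioi x, Real.exp (-u ^ 2 / 2) / Real.sqrt (2 * Real.pi)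

namespace Stmt11Aux

noncomputable def phi (u : ℝ) : ℝ := Real.exp (-u ^ 2 / 2) / Real.sqrt (2 * Real.pi)

lemma phi_cont : Continuous phi := by
  unfold phi
  fun_prop

lemma phi_integrable : Integrable phi := by
  have h : Integrable (fun u : ℝ => Real.exp (-(1/2 : ℝ) * u ^ 2)) :=
    integrable_exp_neg_mul_sq (by norm_num)
  have := h.div_const (Real.sqrt (2 * Real.pi))
  convert this using 2 with u
  unfold phi
  ring_nf

lemma PhiBar_sub {s t : ℝ} (h : s ≤ t) :
    PhiBar s - PhiBar t = ∫ u in s..t, phi u := by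
  have hunion : Ioc s t ∪ Ioi t = Ioi s := Ioc_union_Ioi_eq_Ioi h
  have hdisj : Disjoint (Ioc s t) (Ioi t) := by
    simp [Set.disjoint_left]
  have := setIntegral_union hdisj measurableSet_Ioi
    (phi_integrable.integrableOn (s := Ioc s t)) (phi_integrable.integrableOn (s := Ioi t))
    (f := phi) (μ := volume)
  rw [hunion] at this
  rw [intervalIntegral.integral_of_le h]
  show PhiBar s - PhiBar t = ∫ u in Ioc s t, phi u
  have hs : PhiBar s = ∫ u in Ioi s, phi u := rfl
  have ht : PhiBar t = ∫ u in Ioi t, phi u := rfl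
  rw [hs, ht, this]; ring

lemma PhiBar_eq (x : ℝ) : PhiBar x = PhiBar 0 - ∫ u in (0:ℝ)..x, phi u := by
  rcases le_total 0 x with h | h
  · have := PhiBar_sub h
    linarith
  · have := PhiBar_sub h
    rw [intervalIntegral.integral_symm]
    linarith

lemma hasDerivAt_PhiBar (x : ℝ) : HasDerivAt PhiBar (-(phi x)) x := by
  have h2 : HasDerivAt (fun u => ∫ t in (0:ℝ)..u, phi t) (phi x) x :=
    intervalIntegral.integral_hasDerivAt_right
      phi_integrable.intervalIntegrable
      phi_cont.stronglyMeasurable.stronglyMeasurableAtFilter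
      phi_cont.continuousAt
  have h3 := h2.const_sub (PhiBar 0)
  exact h3.congr_of_eventuallyEq (Filter.Eventually.of_forall fun t => PhiBar_eq t)

lemma PhiBar_zero : PhiBar 0 = 1 / 2 := by
  have h : PhiBar 0 = (∫ u in Ioi (0:ℝ), Real.exp (-(1/2 : ℝ) * u ^ 2)) / Real.sqrt (2 * Real.pi) := by
    rw [PhiBar, ← integral_div]
    congr 1 with u
    ring_nf
  rw [h, integral_gaussian_Ioi]
  have hπ : Real.pi / (1/2) = 2 * Real.pi := by ring
  rw [hπ]
  have h2 : Real.sqrt (2 * Real.pi) > 0 := Real.sqrt_pos.2 (by positivity)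
  field_simp

lemma PhiBar_tendsto : Tendsto PhiBar atTop (𝓝 0) := by
  have h : Tendsto (fun b => ∫ u in (0:ℝ)..b, phi u) atTop (𝓝 (∫ u in Ioi (0:ℝ), phi u)) :=
    intervalIntegral_tendsto_integral_Ioi 0 phi_integrable.integrableOn tendsto_id
  have h2 : Tendsto (fun b => PhiBar 0 - (∫ u in (0:ℝ)..b, phi u)) atTop
      (𝓝 (PhiBar 0 - ∫ u in Ioi (0:ℝ), phi u)) := tendsto_const_nhds.sub h
  have h3 : PhiBar 0 - (∫ u in Ioi (0:ℝ), phi u) = 0 := by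
    have : PhiBar 0 = ∫ u in Ioi (0:ℝ), phi u := rfl
    linarith
  rw [h3] at h2
  exact h2.congr fun b => (PhiBar_eq b).symm

lemma PhiBar_anti : Antitone PhiBar := by
  intro s t h
  have hsub := PhiBar_sub h
  have hnn : 0 ≤ ∫ u in s..t, phi u := by
    apply intervalIntegral.integral_nonneg h
    intro u _
    unfold phi; positivity
  linarith

noncomputable def a : ℝ := Real.sqrt (2 / Real.pi)

lemma a_pos : 0 < a := Real.sqrt_pos.2 (by positivity)

lemma a_sq : a ^ 2 = 2 / Real.pi := Real.sq_sqrt (by positivity)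

lemma a_le_one : a ≤ 1 := by
  rw [show (1:ℝ) = Real.sqrt 1 by simp [Real.sqrt_one]]
  apply Real.sqrt_le_sqrt
  rw [div_le_one Real.pi_pos]
  linarith [Real.two_le_pi]

lemma inv_sqrt_two_pi : (Real.sqrt (2 * Real.pi))⁻¹ = a / 2 := by
  have h1 : a * Real.sqrt (2 * Real.pi) = 2 := by
    rw [a, ← Real.sqrt_mul (by positivity)]
    rw [show 2 / Real.pi * (2 * Real.pi) = 4 by field_simp; ring]
    rw [show (4:ℝ) = 2^2 by norm_num, Real.sqrt_sq (by norm_num)]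
  have h2 : Real.sqrt (2 * Real.pi) > 0 := Real.sqrt_pos.2 (by positivity)
  have h3 : Real.sqrt (2 * Real.pi) = Real.sqrt 2 * Real.sqrt Real.pi :=
    Real.sqrt_mul (by norm_num) _
  rw [h3] at h1 h2
  field_simp
  rw [h3]; linarith

lemma phi_eq (u : ℝ) : phi u = Real.exp (-u ^ 2 / 2) * (a / 2) := by
  rw [phi, div_eq_mul_inv, inv_sqrt_two_pi]

noncomputable def g (x : ℝ) : ℝ := (x + a) * Real.exp (-(a * x)) - a

lemma g_zero : g 0 = 0 := by simp [g]

lemma hasDerivAt_g (x : ℝ) : HasDerivAt g ((1 - a * (x + a)) * Real.exp (-(a * x))) x := by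
  have h1 : HasDerivAt (fun x : ℝ => x + a) 1 x := (hasDerivAt_id x).add_const a
  have h2 : HasDerivAt (fun x : ℝ => -(a * x)) (-a) x := by
    exact ((hasDerivAt_id x).const_mul a).neg.congr_deriv (by ring)
  have h3 := h2.exp
  have h4 := (h1.mul h3).sub_const a
  exact h4.congr_deriv (by ring)

lemma g_mono : MonotoneOn g (Icc 0 (1/a - a)) := by
  apply monotoneOn_of_deriv_nonneg (convex_Icc _ _)
  · exact (Differentiable.continuous (fun t => (hasDerivAt_g t).differentiableAt)).continuousOn
  · exact fun t _ => (hasDerivAt_g t).differentiableAt.differentiableWithinAt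
  · intro t ht
    rw [interior_Icc, mem_Ioo] at ht
    rw [(hasDerivAt_g t).deriv]
    have ha := a_pos
    have h : a * (t + a) ≤ 1 := by
      have : t ≤ 1/a - a := ht.2.le
      have h2 : a * (t + a) ≤ a * (1/a - a + a) := by nlinarith
      rw [show 1/a - a + a = 1/a by ring] at h2
      rw [mul_one_div, div_self (ne_of_gt ha)] at h2
      exact h2
    have := Real.exp_pos (-(a * t))
    nlinarith

lemma g_anti : AntitoneOn g (Ici (1/a - a)) := by
  apply antitoneOn_of_deriv_nonpos (convex_Ici _)
  · exact (Differentiable.continuous (fun t => (hasDerivAt_g t).differentiableAt)).continuousOn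
  · exact fun t _ => (hasDerivAt_g t).differentiableAt.differentiableWithinAt
  · intro t ht
    rw [interior_Ici, mem_Ioi] at ht
    rw [(hasDerivAt_g t).deriv]
    have ha := a_pos
    have h : 1 ≤ a * (t + a) := by
      have : 1/a - a < t := ht
      have h2 : a * (1/a - a + a) ≤ a * (t + a) := by nlinarith
      rw [show 1/a - a + a = 1/a by ring, mul_one_div, div_self (ne_of_gt ha)] at h2
      exact h2
    have := Real.exp_pos (-(a * t))
    nlinarith

noncomputable def F (x : ℝ) : ℝ := PhiBar x - Real.exp (-x ^ 2 / 2 - a * x) / 2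

lemma hasDerivAt_F (x : ℝ) : HasDerivAt F (Real.exp (-x ^ 2 / 2) / 2 * g x) x := by
  have h1 : HasDerivAt (fun x : ℝ => -x ^ 2 / 2 - a * x) (-x - a) x := by
    have hp : HasDerivAt (fun x : ℝ => x ^ 2) (2 * x) x := by
      simpa using hasDerivAt_pow 2 x
    have := ((hp.neg.div_const 2).sub ((hasDerivAt_id x).const_mul a))
    exact this.congr_deriv (by ring)
  have h2 := (h1.exp.div_const 2)
  have h3 := (hasDerivAt_PhiBar x).sub h2
  refine h3.congr_deriv ?_
  rw [phi_eq, g]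
  rw [show -x ^ 2 / 2 - a * x = -x ^ 2 / 2 + -(a * x) by ring, Real.exp_add]
  ring

lemma F_diff : Differentiable ℝ F := fun t => (hasDerivAt_F t).differentiableAt

lemma F_zero : F 0 = 0 := by
  simp [F, PhiBar_zero]

lemma F_tendsto : Tendsto F atTop (𝓝 0) := by
  have harg : Tendsto (fun x : ℝ => -x ^ 2 / 2 - a * x) atTop atBot := by
    apply tendsto_atBot_mono' atTop _ tendsto_neg_atTop_atBot
    filter_upwards [eventually_ge_atTop (2:ℝ)] with x hx
    have ha := a_pos
    nlinarith
  have h2 : Tendsto (fun x : ℝ => Real.exp (-x ^ 2 / 2 - a * x) / 2) atTop (𝓝 (0/2)) :=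
    (Real.tendsto_exp_atBot.comp harg).div_const 2
  exact (by simpa using PhiBar_tendsto.sub h2 : Tendsto (fun x => PhiBar x - Real.exp (-x ^ 2 / 2 - a * x) / 2) atTop (𝓝 0))

lemma main {x : ℝ} (hx : 0 ≤ x) : Real.exp (-x ^ 2 / 2 - a * x) / 2 ≤ PhiBar x := by
  have key : 0 ≤ F x := by
    have hc : 0 ≤ 1/a - a := by
      have ha := a_pos
      have h1 : a * a ≤ 1 := by nlinarith [a_le_one]
      rw [sub_nonneg, le_div_iff₀ ha]
      linarith
    rcases le_or_gt 0 (g x) with hg | hg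
    · -- g x ≥ 0 : F monotone on [0, x]
      have hmono : MonotoneOn F (Icc 0 x) := by
        apply monotoneOn_of_deriv_nonneg (convex_Icc _ _)
          F_diff.continuous.continuousOn
          (fun t _ => (F_diff t).differentiableWithinAt)
        intro t ht
        rw [interior_Icc, mem_Ioo] at ht
        rw [(hasDerivAt_F t).deriv]
        have hgt : 0 ≤ g t := by
          rcases le_or_gt t (1/a - a) with h | h
          · have := g_mono ⟨le_refl 0, hc⟩ ⟨ht.1.le, h⟩ ht.1.le
            rw [g_zero] at this; exact this
          · rcases le_or_gt x (1/a - a) with h2 | h2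
            · linarith [ht.2]
            · exact le_trans hg (g_anti (mem_Ici.2 h.le) (mem_Ici.2 h2.le) ht.2.le)
        positivity
      have := hmono ⟨le_refl 0, hx⟩ ⟨hx, le_refl x⟩ hx
      rw [F_zero] at this; exact this
    · -- g x < 0 : F antitone on [x, ∞), tends to 0
      have hxc : 1/a - a ≤ x := by
        by_contra h
        push_neg at h
        have := g_mono ⟨le_refl 0, hc⟩ ⟨hx, h.le⟩ hx
        rw [g_zero] at this; linarith
      have hanti : AntitoneOn F (Ici x) := by
        apply antitoneOn_of_deriv_nonpos (convex_Ici _)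
          F_diff.continuous.continuousOn
          (fun t _ => (F_diff t).differentiableWithinAt)
        intro t ht
        rw [interior_Ici, mem_Ioi] at ht
        rw [(hasDerivAt_F t).deriv]
        have hgt : g t ≤ 0 := le_trans (g_anti (mem_Ici.2 hxc) (mem_Ici.2 (hxc.trans ht.le)) ht.le) hg.le
        have : 0 < Real.exp (-t ^ 2 / 2) / 2 := by positivity
        nlinarith
      apply le_of_tendsto F_tendsto
      filter_upwards [eventually_ge_atTop x] with t ht
      exact hanti (mem_Ici.2 (le_refl x)) (mem_Ici.2 ht) ht
  unfold F at key
  linarith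

end Stmt11Aux

/-- for all `0 < y < 1/2`,
`Φ̄^{-1}(y) ≥ √(2·log(1/y) − 2·log 2 + 2/π) − √(2/π)`.  Since `Φ̄` is continuous and
strictly decreasing, `Φ̄^{-1}(y)` is the unique `x` with `Φ̄(x) = y`; we phrase the claim
for any such `x`. -/
theorem stmt11 (y : ℝ) (hy : y ∈ Set.Ioo (0 : ℝ) (1 / 2)) (x : ℝ) (hx : PhiBar x = y) :
    Real.sqrt (2 * Real.log (1 / y) - 2 * Real.log 2 + 2 / Real.pi) - Real.sqrt (2 / Real.pi)
      ≤ x := by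
  obtain ⟨hy0, hy2⟩ := hy
  have ha := Stmt11Aux.a_pos
  have hxnn : 0 ≤ x := by
    by_contra h
    push_neg at h
    have := Stmt11Aux.PhiBar_anti h.le
    rw [Stmt11Aux.PhiBar_zero, hx] at this
    linarith
  have hmain := Stmt11Aux.main hxnn
  rw [hx] at hmain
  have hexp : Real.exp (-x ^ 2 / 2 - Stmt11Aux.a * x) ≤ 2 * y := by linarith
  have hlog : -x ^ 2 / 2 - Stmt11Aux.a * x ≤ Real.log (2 * y) := by
    have := Real.log_le_log (Real.exp_pos _) hexp
    rwa [Real.log_exp] at this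
  rw [Real.log_mul (by norm_num) (ne_of_gt hy0)] at hlog
  have hR : 2 * Real.log (1 / y) - 2 * Real.log 2 + 2 / Real.pi ≤ (x + Stmt11Aux.a) ^ 2 := by
    rw [one_div, Real.log_inv, ← Stmt11Aux.a_sq]
    nlinarith
  have hsqrt : Real.sqrt (2 * Real.log (1 / y) - 2 * Real.log 2 + 2 / Real.pi)
      ≤ x + Stmt11Aux.a := by
    calc Real.sqrt (2 * Real.log (1 / y) - 2 * Real.log 2 + 2 / Real.pi)
        ≤ Real.sqrt ((x + Stmt11Aux.a) ^ 2) := Real.sqrt_le_sqrt hR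
      _ = x + Stmt11Aux.a := Real.sqrt_sq (by linarith)
  have : Real.sqrt (2 / Real.pi) = Stmt11Aux.a := rfl
  linarith
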